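/- Let x, y : [β₀, β₁) → ℝ be C¹ functions with 0 ≤ x < 1 and y ≥ 0, and define w(x, y) = (3(1 − x) + 1 + y)²/(1 − x). Suppose along the curve the inequality (3x − 2 + y)·ẋ + 2(1 − x)·ẏ ≤ −α(x,y)/2 holds, where α(x,y) = 3x² − 2x + y² + 2y, and suppose w(x(β₀), y(β₀)) ≤ 16. Then w(x(β), y(β)) ≤ 16 for all β ∈ [β₀, β₁). In particular x(β) ≤ 8/9 whenever y(β) ≥ 0. -/

import Mathlib

lemma preserve_le {a b c : ℝ} {f : ℝ → ℝ}
    (hdiff : ∀ t ∈ Set.Ico a b, DifferentiableAt ℝ f t)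
    (hder : ∀ t ∈ Set.Ico a b, c ≤ f t → deriv f t ≤ 0)
    (h0 : f a ≤ c) : ∀ t ∈ Set.Ico a b, f t ≤ c := by
  intro t ht
  by_contra hgt
  push_neg at hgt
  have hIcc : Set.Icc a t ⊆ Set.Ico a b := fun u hu => ⟨hu.1, lt_of_le_of_lt hu.2 ht.2⟩
  have hcont : ContinuousOn f (Set.Icc a t) := fun u hu =>
    ((hdiff u (hIcc hu)).continuousAt).continuousWithinAt
  set S : Set ℝ := {s | s ∈ Set.Icc a t ∧ f s ≤ c} with hS
  have hSne : S.Nonempty := ⟨a, ⟨le_refl a, ht.1⟩, h0⟩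
  have hSsub : S ⊆ Set.Icc a t := fun s hs => hs.1
  have hScompact : IsCompact S := by
    have hclosed : IsClosed S := by
      have := hcont.preimage_isClosed_of_isClosed isClosed_Icc isClosed_Iic (t := Set.Iic c)
      exact this
    exact (isCompact_Icc).of_isClosed_subset hclosed hSsub
  obtain ⟨s, hsS, hsmax⟩ := hScompact.exists_isGreatest hSne
  have hst : s < t := by
    rcases lt_or_eq_of_le hsS.1.2 with h | h
    · exact h
    · exact absurd (h ▸ hsS.2) (not_le.mpr hgt)
  have hanti : AntitoneOn f (Set.Icc s t) := by
    apply antitoneOn_of_deriv_nonpos (convex_Icc s t)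
    · exact hcont.mono (Set.Icc_subset_Icc_left hsS.1.1)
    · intro u hu
      rw [interior_Icc] at hu
      exact (hdiff u (hIcc ⟨hsS.1.1.trans hu.1.le, hu.2.le⟩)).differentiableWithinAt
    · intro u hu
      rw [interior_Icc] at hu
      have humem : u ∈ Set.Icc a t := ⟨hsS.1.1.trans hu.1.le, hu.2.le⟩
      have hfu : c < f u := by
        by_contra hle
        push_neg at hle
        exact absurd (hsmax ⟨humem, hle⟩) (not_le.mpr hu.1)
      exact hder u (hIcc humem) hfu.le
  have : f t ≤ f s := hanti ⟨le_refl s, hst.le⟩ ⟨hst.le, le_refl t⟩ hst.le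
  exact absurd (this.trans hsS.2) (not_le.mpr hgt)


/-- Monotonicity core of the Buchdahl inequality: along a curve `(x, y)` with
`0 ≤ x < 1`, `y ≥ 0`, satisfying `(3x − 2 + y)ẋ + 2(1 − x)ẏ ≤ −α(x,y)/2` with
`α = 3x² − 2x + y² + 2y`, the quantity `w = (3(1−x)+1+y)²/(1−x)` stays `≤ 16` if it
starts `≤ 16`; in particular `x ≤ 8/9`. -/
theorem buchdahl_monotonicity (β₀ β₁ : ℝ) (x y : ℝ → ℝ)
    (hx : ∀ β ∈ Set.Ico β₀ β₁, DifferentiableAt ℝ x β)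
    (hy : ∀ β ∈ Set.Ico β₀ β₁, DifferentiableAt ℝ y β)
    (hx01 : ∀ β ∈ Set.Ico β₀ β₁, 0 ≤ x β ∧ x β < 1)
    (hy0 : ∀ β ∈ Set.Ico β₀ β₁, 0 ≤ y β)
    (hineq : ∀ β ∈ Set.Ico β₀ β₁,
      (3 * x β - 2 + y β) * deriv x β + 2 * (1 - x β) * deriv y β
        ≤ -(3 * (x β) ^ 2 - 2 * x β + (y β) ^ 2 + 2 * y β) / 2)
    (hβ₀ : β₀ < β₁)
    (hinit : (3 * (1 - x β₀) + 1 + y β₀) ^ 2 / (1 - x β₀) ≤ 16) :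
    ∀ β ∈ Set.Ico β₀ β₁,
      (3 * (1 - x β) + 1 + y β) ^ 2 / (1 - x β) ≤ 16 ∧ x β ≤ 8 / 9 := by
  set g : ℝ → ℝ := fun β => (3 * (1 - x β) + 1 + y β) ^ 2 / (1 - x β) with hg
  -- differentiability of g with explicit derivative
  have key : ∀ β ∈ Set.Ico β₀ β₁, HasDerivAt g
      (((2 * (3 * (1 - x β) + 1 + y β) ^ 1 * (3 * (-deriv x β) + deriv y β)) * (1 - x β)
        - (3 * (1 - x β) + 1 + y β) ^ 2 * (-deriv x β)) / (1 - x β) ^ 2) β := by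
    intro β hβ
    have hxd : HasDerivAt x (deriv x β) β := (hx β hβ).hasDerivAt
    have hyd : HasDerivAt y (deriv y β) β := (hy β hβ).hasDerivAt
    have hu : HasDerivAt (fun b => 1 - x b) (-deriv x β) β := hxd.const_sub 1
    have hN : HasDerivAt (fun b => 3 * (1 - x b) + 1 + y b)
        (3 * (-deriv x β) + deriv y β) β := by
      have := ((hu.const_mul 3).add_const 1).add hyd
      exact this
    have hN2 : HasDerivAt (fun b => (3 * (1 - x b) + 1 + y b) ^ 2)
        (2 * (3 * (1 - x β) + 1 + y β) ^ 1 * (3 * (-deriv x β) + deriv y β)) β := hN.pow 2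
    have hne : (1 - x β) ≠ 0 := by
      have := (hx01 β hβ).2; linarith
    exact hN2.div hu hne
  have hgle : ∀ β ∈ Set.Ico β₀ β₁, g β ≤ 16 := by
    apply preserve_le (fun β hβ => (key β hβ).differentiableAt) _ hinit
    intro β hβ h16
    rw [(key β hβ).deriv]
    simp only [hg] at h16
    -- notation
    have hxle := (hx01 β hβ)
    have hyge := hy0 β hβ
    have hin := hineq β hβ
    set X := x β; set Y := y β; set X' := deriv x β; set Y' := deriv y β
    have hu : (0:ℝ) < 1 - X := by linarith [hxle.2]
    have hN : (0:ℝ) < 3 * (1 - X) + 1 + Y := by linarith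
    -- g β ≥ 16 means N² ≥ 16(1-X)
    have hB : 16 * (1 - X) ≤ (3 * (1 - X) + 1 + Y) ^ 2 := by
      have := (le_div_iff₀ hu).mp h16
      linarith
    -- A ≥ B/4 ≥ 0
    have hA : 0 ≤ 3 * X ^ 2 - 2 * X + Y ^ 2 + 2 * Y := by nlinarith [sq_nonneg (X + Y)]
    -- derivative identity and bound
    have hid : ((2 * (3 * (1 - X) + 1 + Y) ^ 1 * (3 * (-X') + Y')) * (1 - X)
        - (3 * (1 - X) + 1 + Y) ^ 2 * (-X')) / (1 - X) ^ 2
        = ((3 * (1 - X) + 1 + Y) / (1 - X) ^ 2) *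
          ((3 * X - 2 + Y) * X' + 2 * (1 - X) * Y') := by
      field_simp
      ring
    rw [hid]
    have hc : 0 < (3 * (1 - X) + 1 + Y) / (1 - X) ^ 2 := by positivity
    have : ((3 * (1 - X) + 1 + Y) / (1 - X) ^ 2) *
          ((3 * X - 2 + Y) * X' + 2 * (1 - X) * Y')
        ≤ ((3 * (1 - X) + 1 + Y) / (1 - X) ^ 2) *
          (-(3 * X ^ 2 - 2 * X + Y ^ 2 + 2 * Y) / 2) :=
      mul_le_mul_of_nonneg_left hin hc.le
    refine this.trans ?_
    apply mul_nonpos_of_nonneg_of_nonpos hc.le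
    linarith
  intro β hβ
  have h16 := hgle β hβ
  refine ⟨h16, ?_⟩
  have hxle := (hx01 β hβ)
  have hyge := hy0 β hβ
  have hu : (0:ℝ) < 1 - x β := by linarith [hxle.2]
  rw [hg] at h16
  have hB : (3 * (1 - x β) + 1 + y β) ^ 2 ≤ 16 * (1 - x β) := by
    have := (div_le_iff₀ hu).mp h16
    linarith
  nlinarith [sq_nonneg (y β), hxle.1]
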